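/- For every integer M ≥ 1 and every integer n with N_K ≤ n ≤ (M − 1)·N_K, one has (M − 1)! · f_M(n) ≥ (N_K + 1)^{M−1}; in particular f_M(n) ≥ f_M(N_K) = C(N_K + M − 1, M − 1) ≥ (N_K + 1)^{M−1}/(M − 1)! on this central plateau. -/

import Mathlib

/-- The number of `M`-tuples `(n_1, …, n_M)` with each `n_i ∈ {0, …, NK}`
and `n_1 + ⋯ + n_M = n`. -/
def f (NK M : ℕ) (n : ℤ) : ℕ :=
  (Finset.univ.filter
    (fun t : Fin M → Fin (NK + 1) => (∑ i, ((t i : ℕ) : ℤ)) = n)).card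

lemma f_zero (NK : ℕ) (n : ℤ) : f NK 0 n = if n = 0 then 1 else 0 := by
  unfold f
  rcases eq_or_ne n 0 with h | h <;> simp [h, eq_comm]

lemma f_neg (NK M : ℕ) (n : ℤ) (hn : n < 0) : f NK M n = 0 := by
  unfold f
  rw [Finset.card_eq_zero, Finset.filter_eq_empty_iff]
  intro t _ hs
  have : (0:ℤ) ≤ ∑ i, ((t i : ℕ) : ℤ) := Finset.sum_nonneg fun i _ => by positivity
  omega

lemma f_succ (NK M : ℕ) (n : ℤ) :
    f NK (M+1) n = ∑ k ∈ Finset.range (NK+1), f NK M (n - k) := by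
  unfold f
  rw [Finset.card_eq_sum_card_fiberwise (f := fun t : Fin (M+1) → Fin (NK+1) => (t 0 : ℕ))
    (t := Finset.range (NK+1)) (fun x _ => Finset.mem_range.2 (x 0).isLt)]
  refine Finset.sum_congr rfl fun k hk => ?_
  have hk' : k < NK + 1 := Finset.mem_range.1 hk
  refine Finset.card_nbij' (fun t => Fin.tail t) (fun s => Fin.cons ⟨k, hk'⟩ s) ?_ ?_ ?_ ?_
  · intro t ht
    simp only [Finset.mem_coe, Finset.mem_filter, Finset.mem_univ, true_and] at ht ⊢
    obtain ⟨hsum, h0⟩ := ht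
    rw [Fin.sum_univ_succ] at hsum
    have : ((t 0 : ℕ) : ℤ) = k := by exact_mod_cast h0
    rw [this] at hsum
    simpa [Fin.tail] using by omega
  · intro s hs
    simp only [Finset.mem_coe, Finset.mem_filter, Finset.mem_univ, true_and] at hs ⊢
    constructor
    · rw [Fin.sum_univ_succ]
      simp [Fin.cons, hs]
    · simp
  · intro t ht
    simp only [Finset.mem_coe, Finset.mem_filter, Finset.mem_univ, true_and] at ht
    have h0 : t 0 = ⟨k, hk'⟩ := Fin.ext ht.2
    show Fin.cons ⟨k, hk'⟩ (Fin.tail t) = t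
    rw [← h0]
    exact Fin.cons_self_tail t
  · intro s _
    exact Fin.tail_cons _ _

lemma f_symm (NK M : ℕ) (n : ℤ) : f NK M ((M:ℤ) * NK - n) = f NK M n := by
  unfold f
  refine Finset.card_nbij' (fun t i => Fin.rev (t i)) (fun t i => Fin.rev (t i)) ?_ ?_ ?_ ?_
  · intro t ht
    simp only [Finset.mem_coe, Finset.mem_filter, Finset.mem_univ, true_and] at ht ⊢
    have h : ∀ i : Fin M, ((Fin.rev (t i) : ℕ) : ℤ) = (NK : ℤ) - (t i : ℕ) := by
      intro i
      have : (Fin.rev (t i)).val = NK - (t i).val := by simp [Fin.val_rev]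
      rw [this]
      have := (t i).isLt
      push_cast [Nat.cast_sub (by omega : (t i).val ≤ NK)]
      ring
    rw [Finset.sum_congr rfl (fun i _ => h i), Finset.sum_sub_distrib, ht]
    simp [mul_comm]
  · intro t ht
    simp only [Finset.mem_coe, Finset.mem_filter, Finset.mem_univ, true_and] at ht ⊢
    have h : ∀ i : Fin M, ((Fin.rev (t i) : ℕ) : ℤ) = (NK : ℤ) - (t i : ℕ) := by
      intro i
      have : (Fin.rev (t i)).val = NK - (t i).val := by simp [Fin.val_rev]
      rw [this]
      have := (t i).isLt
      push_cast [Nat.cast_sub (by omega : (t i).val ≤ NK)]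
      ring
    rw [Finset.sum_congr rfl (fun i _ => h i), Finset.sum_sub_distrib, ht]
    simp [mul_comm]
  · intro t _; funext i; exact Fin.rev_rev _
  · intro t _; funext i; exact Fin.rev_rev _

lemma f_small (NK : ℕ) : ∀ m : ℕ, ∀ j : ℕ, j ≤ NK → f NK (m+1) (j : ℤ) = (j+m).choose m := by
  intro m
  induction m with
  | zero =>
    intro j hj
    rw [f_succ]
    have : ∀ k ∈ Finset.range (NK+1), f NK 0 ((j:ℤ) - k) = if k = j then 1 else 0 := by
      intro k hk
      rw [f_zero]
      by_cases h : k = j <;> simp [h] <;> omega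
    rw [Finset.sum_congr rfl this, Finset.sum_ite_eq' (Finset.range (NK+1)) j (fun _ => 1)]
    simp [Nat.lt_succ_of_le hj]
  | succ m ih =>
    intro j hj
    rw [f_succ]
    have hsub : Finset.range (j+1) ⊆ Finset.range (NK+1) := by
      apply Finset.range_subset_range.2; omega
    rw [← Finset.sum_subset hsub (fun k hk hk' => by
      apply f_neg
      simp only [Finset.mem_range] at hk hk'
      push_cast
      omega)]
    have : ∀ k ∈ Finset.range (j+1), f NK (m+1) ((j:ℤ) - k) = ((j-k)+m).choose m := by
      intro k hk
      simp only [Finset.mem_range] at hk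
      have hkj : k ≤ j := by omega
      have : (j:ℤ) - k = ((j - k : ℕ) : ℤ) := by push_cast [Nat.cast_sub hkj]; ring
      rw [this, ih (j-k) (by omega)]
    rw [Finset.sum_congr rfl this]
    -- ∑ k in range (j+1), (j-k+m).choose m = (j+m+1).choose (m+1)
    rw [← Finset.sum_range_reflect (fun k => (j - k + m).choose m) (j+1)]
    have : ∀ k ∈ Finset.range (j+1), (j - (j + 1 - 1 - k) + m).choose m = (k+m).choose m := by
      intro k hk
      simp only [Finset.mem_range] at hk
      congr 2
      omega
    rw [Finset.sum_congr rfl this]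
    have := Nat.sum_Icc_choose (j+m) m
    rw [show j + (m+1) = (j+m)+1 by omega, ← this]
    refine Finset.sum_bij (fun k _ => k + m) ?_ ?_ ?_ ?_
    · intro k hk
      simp only [Finset.mem_range] at hk
      simp only [Finset.mem_Icc]
      omega
    · intro a _ b _ h
      have : a + m = b + m := h
      omega
    · intro b hb
      simp only [Finset.mem_Icc] at hb
      exact ⟨b - m, Finset.mem_range.2 (by omega), show b - m + m = b by omega⟩
    · intro k _; rfl

lemma f_mono (NK : ℕ) : ∀ M : ℕ, ∀ a b : ℤ, a ≤ b → 2*b ≤ (M:ℤ)*NK → f NK M a ≤ f NK M b := by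
  intro M
  induction M with
  | zero =>
    intro a b hab hb
    simp only [Nat.cast_zero, zero_mul] at hb
    rw [f_zero, f_zero]
    split_ifs <;> omega
  | succ M IH =>
    have step : ∀ p : ℤ, 2*(p+1) ≤ ((M:ℤ)+1)*NK → f NK (M+1) p ≤ f NK (M+1) (p+1) := by
      intro p hp
      have h1 : f NK (M+1) (p+1) = f NK M (p+1) + ∑ k ∈ Finset.range NK, f NK M (p - k) := by
        rw [f_succ, Finset.sum_range_succ']
        have e1 : ∀ k ∈ Finset.range NK, f NK M (p+1 - ((k+1 : ℕ) : ℤ)) = f NK M (p - k) := by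
          intro k _
          congr 1
          push_cast
          ring
        rw [Finset.sum_congr rfl e1]
        norm_num [add_comm]
      have h2 : f NK (M+1) p = (∑ k ∈ Finset.range NK, f NK M (p - k)) + f NK M (p - NK) := by
        rw [f_succ, Finset.sum_range_succ]
      have hNK0 : (0:ℤ) ≤ NK := Int.natCast_nonneg NK
      have key : f NK M (p - NK) ≤ f NK M (p + 1) := by
        by_cases hc : 2*(p+1) ≤ (M:ℤ)*NK
        · exact IH _ _ (by linarith) hc
        · push_neg at hc
          rw [← f_symm NK M (p+1)]
          exact IH _ _ (by linarith) (by linarith)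
      omega
    intro a b hab hb
    push_cast at hb
    have hNK0 : (0:ℤ) ≤ NK := Int.natCast_nonneg NK
    exact Int.le_induction (motive := fun c _ => 2*c ≤ ((M:ℤ)+1)*NK → f NK (M+1) a ≤ f NK (M+1) c)
      (fun _ => le_refl _)
      (fun p _ ihp h2 => le_trans (ihp (by linarith)) (step p h2)) b hab hb

/-- On the central plateau `N_K ≤ n ≤ (M−1)·N_K`, `(M−1)! · f_M(n) ≥ (N_K+1)^(M−1)`;
in particular `f_M(n) ≥ f_M(N_K) = C(N_K + M − 1, M − 1)` and
`(M−1)! · C(N_K + M − 1, M − 1) ≥ (N_K+1)^(M−1)`. -/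
theorem stmt7 (NK : ℕ) (hNK : 0 < NK) (M : ℕ) (hM : 1 ≤ M)
    (n : ℤ) (hn0 : (NK : ℤ) ≤ n) (hnK : n ≤ ((M : ℤ) - 1) * NK) :
    ((NK + 1) ^ (M - 1) ≤ Nat.factorial (M - 1) * f NK M n) ∧
    f NK M (NK : ℤ) ≤ f NK M n ∧
    f NK M (NK : ℤ) = Nat.choose (NK + M - 1) (M - 1) ∧
    (NK + 1) ^ (M - 1) ≤ Nat.factorial (M - 1) * Nat.choose (NK + M - 1) (M - 1) := by
  obtain ⟨m, rfl⟩ : ∃ m, M = m + 1 := ⟨M - 1, by omega⟩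
  simp only [Nat.add_sub_cancel] at *
  have hNK0 : (0:ℤ) ≤ NK := Int.natCast_nonneg NK
  have hmK : n ≤ (m:ℤ) * NK := by push_cast at hnK; linarith
  -- choose formula
  have c3 : f NK (m+1) (NK : ℤ) = (NK + m).choose m := f_small NK m NK le_rfl
  have c3' : f NK (m+1) (NK : ℤ) = (NK + (m+1) - 1).choose m := by
    rw [show NK + (m + 1) - 1 = NK + m by omega]; exact c3
  -- plateau
  have c2 : f NK (m+1) (NK : ℤ) ≤ f NK (m+1) n := by
    by_cases hc : 2*n ≤ ((m:ℤ)+1)*NK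
    · exact f_mono NK (m+1) _ _ hn0 (by push_cast; linarith)
    · push_neg at hc
      rw [← f_symm NK (m+1) n]
      apply f_mono NK (m+1)
      · push_cast; linarith
      · push_cast; linarith
    -- factorial bound
  have c4 : (NK + 1) ^ m ≤ Nat.factorial m * (NK + m).choose m := by
    calc (NK + 1) ^ m ≤ (NK + 1).ascFactorial m := Nat.pow_succ_le_ascFactorial (NK+1) m
      _ = Nat.factorial m * (NK + m).choose m := Nat.ascFactorial_eq_factorial_mul_choose NK m
  have c4' : (NK + 1) ^ m ≤ Nat.factorial m * (NK + (m+1) - 1).choose m := by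
    rw [show NK + (m+1) - 1 = NK + m by omega]; exact c4
  refine ⟨?_, c2, c3', c4'⟩
  calc (NK + 1) ^ m ≤ Nat.factorial m * (NK + m).choose m := c4
    _ = Nat.factorial m * f NK (m+1) (NK : ℤ) := by rw [c3]
    _ ≤ Nat.factorial m * f NK (m+1) n := Nat.mul_le_mul_left _ c2
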